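/- Let G be a connected groupoid, e an object of G, and F : Y → G a constructive functor on G. Denote by F⁻¹(e) the set of objects a of Y with F(a) = e. Then the evaluation map ev_{F,e} : Mor(F_{G,e}, F) → F⁻¹(e), sending a morphism of constructive functors Φ : Y_{G,e} → Y (over G) to Φ((e, id_e)), is a bijection. -/

import Mathlib

open CategoryTheory

universe v u v' u'

/-- A functor `F : Y ⥤ X` is *constructive* if it is faithful and every isomorphism of `X`
with domain `F.obj a` lifts uniquely to an isomorphism of `Y` with domain `a`. -/
def Constructive {Y : Type u'} {X : Type u} [Category.{v'} Y] [Category.{v} X]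
    (F : Y ⥤ X) : Prop :=
  F.Faithful ∧
    ∀ (a : Y) (x : X) (u : F.obj a ⟶ x), IsIso u →
      ∃! p : Σ b : Y, a ⟶ b,
        IsIso p.2 ∧ ∃ h : F.obj p.1 = x, F.map p.2 = u ≫ eqToHom h.symm
/-- The category `Y_{G,e}`: objects are pairs `(a, u : e ⟶ a)`, morphisms
`(a,u) ⟶ (a',u')` are morphisms `v : a ⟶ a'` of `G` with `u ≫ v = u'`
(i.e. `u' = v ∘ u`). -/
structure YObj {G : Type u} [Groupoid.{v} G] (e : G) : Type (max u v) where
  pt : G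
  up : e ⟶ pt

instance {G : Type u} [Groupoid.{v} G] (e : G) : Category.{v} (YObj e) where
  Hom p q := { v : p.pt ⟶ q.pt // p.up ≫ v = q.up }
  id p := ⟨𝟙 _, Category.comp_id _⟩
  comp f g := ⟨f.1 ≫ g.1, by rw [← Category.assoc, f.2, g.2]⟩
  id_comp f := Subtype.ext (Category.id_comp _)
  comp_id f := Subtype.ext (Category.comp_id _)
  assoc f g h := Subtype.ext (Category.assoc _ _ _)

/-- The forgetful (universal covering) functor `F_{G,e} : Y_{G,e} ⥤ G`. -/
def FGe {G : Type u} [Groupoid.{v} G] (e : G) : YObj e ⥤ G where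
  obj p := p.pt
  map f := f.1
  map_id _ := rfl
  map_comp _ _ := rfl

/-- `YObj e` is a groupoid. -/
instance {G : Type u} [Groupoid.{v} G] (e : G) : Groupoid.{v} (YObj e) where
  inv f := ⟨Groupoid.inv f.1, by
    rw [Groupoid.inv_eq_inv, IsIso.comp_inv_eq, f.2]⟩
  inv_comp f := Subtype.ext (Groupoid.inv_comp _)
  comp_inv f := Subtype.ext (Groupoid.comp_inv _)

/-- The canonical morphism `(e, 𝟙 e) ⟶ p` in `YObj e`. -/
def uP {G : Type u} [Groupoid.{v} G] {e : G} (p : YObj e) :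
    (⟨e, 𝟙 e⟩ : YObj e) ⟶ p := ⟨p.up, Category.id_comp _⟩

theorem uP_comp {G : Type u} [Groupoid.{v} G] {e : G} {p q : YObj e} (f : p ⟶ q) :
    uP p ≫ f = uP q := Subtype.ext f.2

/-- For a constructive functor `F : Y ⥤ G` on a connected groupoid `G`, the evaluation map
`Φ ↦ Φ((e, id_e))`, from morphisms of constructive functors `F_{G,e} → F` (functors over
`G`) to the fiber `F⁻¹(e)`, is a bijection. -/
theorem stmt5 {G : Type u} [Groupoid.{v} G] [IsConnected G] (e : G)
    {Y : Type u'} [Category.{v'} Y] (F : Y ⥤ G) (hF : Constructive F) :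
    Function.Bijective
      (fun Φ : {Φ : YObj e ⥤ Y // Φ ⋙ F = FGe e} =>
        (⟨Φ.1.obj ⟨e, 𝟙 e⟩,
          congrArg (fun (H : YObj e ⥤ G) => H.obj ⟨e, 𝟙 e⟩) Φ.2⟩ :
          {a : Y // F.obj a = e})) := by
  classical
  obtain ⟨hfaith, hlift⟩ := hF
  constructor
  · -- injectivity
    rintro ⟨Φ, hΦ⟩ ⟨Ψ, hΨ⟩ hval
    simp only [Subtype.mk.injEq] at hval
    have hobj0 : Φ.obj ⟨e, 𝟙 e⟩ = Ψ.obj ⟨e, 𝟙 e⟩ := congrArg Subtype.val hval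
    set a₀ := Φ.obj ⟨e, 𝟙 e⟩ with ha₀
    have ha : F.obj a₀ = e := congrArg (fun H : YObj e ⥤ G => H.obj ⟨e, 𝟙 e⟩) hΦ
    -- each functor yields a solution of the unique lifting problem for `eqToHom ha ≫ p.up`
    have key : ∀ (Θ : YObj e ⥤ Y) (hΘ : Θ ⋙ F = FGe e) (h0 : Θ.obj ⟨e, 𝟙 e⟩ = a₀) (p : YObj e),
        IsIso (eqToHom h0.symm ≫ Θ.map (uP p)) ∧
          ∃ h : F.obj (Θ.obj p) = p.pt,
            F.map (eqToHom h0.symm ≫ Θ.map (uP p)) = (eqToHom ha ≫ p.up) ≫ eqToHom h.symm := by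
      intro Θ hΘ h0 p
      refine ⟨inferInstance, congrArg (fun H : YObj e ⥤ G => H.obj p) hΘ, ?_⟩
      have := Functor.congr_hom hΘ (uP p)
      simp only [Functor.comp_map] at this
      rw [F.map_comp, eqToHom_map, this]
      simp [FGe, uP]
      exact eqToHom_trans_assoc _ _ _
    have sig : ∀ p : YObj e,
        (⟨Φ.obj p, eqToHom (rfl : Φ.obj ⟨e, 𝟙 e⟩ = a₀).symm ≫ Φ.map (uP p)⟩ : Σ b : Y, a₀ ⟶ b)
          = ⟨Ψ.obj p, eqToHom hobj0.symm.symm ≫ Ψ.map (uP p)⟩ := fun p =>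
      ((hlift a₀ p.pt (eqToHom ha ≫ p.up) inferInstance).unique
        (key Φ hΦ rfl p) (key Ψ hΨ hobj0.symm p))
    have hobj : ∀ p : YObj e, Φ.obj p = Ψ.obj p := fun p =>
      congrArg Sigma.fst (sig p)
    have hmapU : ∀ p : YObj e,
        Φ.map (uP p) = eqToHom hobj0 ≫ Ψ.map (uP p) ≫ eqToHom (hobj p).symm := by
      intro p
      have h2 := (Sigma.mk.inj_iff.mp (sig p)).2
      have h3 : HEq (Φ.map (uP p)) (Ψ.map (uP p)) :=
        ((eqToHom_comp_heq _ _).symm.trans h2).trans (eqToHom_comp_heq _ _)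
      exact (conj_eqToHom_iff_heq _ _ hobj0 (hobj p)).mpr h3
    refine Subtype.ext (CategoryTheory.Functor.ext hobj ?_)
    intro p q f
    have hf : Φ.map f = inv (Φ.map (uP p)) ≫ Φ.map (uP q) := by
      rw [IsIso.eq_inv_comp, ← Functor.map_comp, uP_comp]
    have hf' : Ψ.map f = inv (Ψ.map (uP p)) ≫ Ψ.map (uP q) := by
      rw [IsIso.eq_inv_comp, ← Functor.map_comp, uP_comp]
    rw [hf, hf', IsIso.inv_comp_eq, hmapU p, hmapU q]
    simp
  · -- surjectivity
    rintro ⟨a₀, ha⟩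
    -- for each `p`, lift `eqToHom ha ≫ p.up` through `F`
    have lift := fun p : YObj e => hlift a₀ p.pt (eqToHom ha ≫ p.up) inferInstance
    set L : ∀ p : YObj e, Σ b : Y, a₀ ⟶ b := fun p => (lift p).choose with hL
    have hLiso : ∀ p, IsIso (L p).2 := fun p => (lift p).choose_spec.1.1
    have hLobj : ∀ p, F.obj (L p).1 = p.pt := fun p => (lift p).choose_spec.1.2.choose
    have hLmap : ∀ p, F.map (L p).2 = (eqToHom ha ≫ p.up) ≫ eqToHom (hLobj p).symm :=
      fun p => (lift p).choose_spec.1.2.choose_spec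
    let Φ : YObj e ⥤ Y :=
      { obj := fun p => (L p).1
        map := fun {p q} f => letI := hLiso p; inv (L p).2 ≫ (L q).2
        map_id := fun p => by letI := hLiso p; simp
        map_comp := fun {p q r} f g => by
          letI := hLiso p; letI := hLiso q; simp }
    have hcomm : Φ ⋙ F = FGe e := by
      refine CategoryTheory.Functor.ext (fun p => hLobj p) ?_
      intro p q f
      show F.map (letI := hLiso p; inv (L p).2 ≫ (L q).2)
        = eqToHom _ ≫ (FGe e).map f ≫ eqToHom _
      letI := hLiso p
      rw [F.map_comp, F.map_inv, IsIso.inv_comp_eq, hLmap p, hLmap q]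
      simp [FGe, ← f.2]
    have hΦe : Φ.obj ⟨e, 𝟙 e⟩ = a₀ := by
      have : (⟨a₀, 𝟙 a₀⟩ : Σ b : Y, a₀ ⟶ b) = L ⟨e, 𝟙 e⟩ := by
        refine (lift ⟨e, 𝟙 e⟩).choose_spec.2 _ ⟨inferInstance, ha, by simp⟩
      exact (congrArg Sigma.fst this).symm
    exact ⟨⟨Φ, hcomm⟩, Subtype.ext hΦe⟩
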